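/- For f(x) = exp(x), every point (x, y) on the focal curve with parameter t ≠ 0 satisfies y = (x - 1)·(1 - log((x - 1)/x)), where x = 1/(1 - eᵗ). -/

import Mathlib

/-- For `f = exp`, every point `(x, y)` on the focal curve with parameter
`t ≠ 0` satisfies `y = (x - 1) * (1 - log ((x - 1)/x))`. -/
theorem stmt_3 (t : ℝ) (ht : t ≠ 0) :
    let f := Real.exp
    let x := 1 / (1 - Real.exp t)
    let y := (f t - t * deriv f t) / (1 - deriv f t)
    y = (x - 1) * (1 - Real.log ((x - 1) / x)) := by
  intro f x y
  have hne : (1:ℝ) - Real.exp t ≠ 0 := by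
    intro h
    apply ht
    have : Real.exp t = 1 := by linarith
    simpa [Real.exp_eq_one_iff] using this
  have hd : deriv f t = Real.exp t := by simp [f]
  have hx : (x - 1) / x = Real.exp t := by
    simp only [x]
    field_simp
    ring
  have hlog : Real.log ((x - 1) / x) = t := by
    rw [hx, Real.log_exp]
  simp only [y, f, hd, hlog]
  simp only [x]
  field_simp
  ring
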